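/- For every integer k ≥ 3, with u_k = 2·log k/(log k − log(k−1)) and ℓ_k = 2(k−1)³·log(k−1)/(k(k−2)) (and u_2 = 2·log 2/(log 2 − log 1) interpreted via u_{k−1} with k−1 ≥ 2, where u_2 = 2), one has u_{k−1} < ℓ_k < u_k. -/

import Mathlib

lemma log_three_le_43 : Real.log 3 ≤ 4/3 := by
  rw [Real.log_le_iff_le_exp (by norm_num)]
  have h := Real.add_one_le_exp (4/9 : ℝ)
  have h3 : Real.exp (4/3 : ℝ) = Real.exp (4/9) ^ (3 : ℕ) := by
    rw [← Real.exp_nat_mul]; norm_num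
  rw [h3]
  calc (3:ℝ) ≤ (4/9 + 1)^(3:ℕ) := by norm_num
    _ ≤ Real.exp (4/9) ^ (3:ℕ) := pow_le_pow_left₀ (by norm_num) h 3

lemma xlogx_le (x : ℝ) (hx : 3 ≤ x) : x * Real.log x ≤ (x - 1)^2 := by
  have hx0 : (0:ℝ) < x := by linarith
  have h2 := Real.log_le_sub_one_of_pos (show (0:ℝ) < x/3 by linarith)
  rw [Real.log_div (ne_of_gt hx0) (by norm_num)] at h2
  have hlog : Real.log x ≤ 4/3 + x/3 - 1 := by
    have := log_three_le_43; linarith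
  have h3 : x * Real.log x ≤ x * (4/3 + x/3 - 1) :=
    mul_le_mul_of_nonneg_left hlog (le_of_lt hx0)
  nlinarith [sq_nonneg (x - 3)]

/-- For k ≥ 3, with u_m = 2 log m/(log m − log(m−1)) and
ℓ_k = 2(k−1)³ log(k−1)/(k(k−2)), one has u_{k−1} < ℓ_k < u_k. -/
theorem stmt15 (k : ℕ) (hk : 3 ≤ k) :
    (2 * Real.log ((k : ℝ) - 1) / (Real.log ((k : ℝ) - 1) - Real.log ((k : ℝ) - 2))
        < 2 * ((k : ℝ) - 1) ^ 3 * Real.log ((k : ℝ) - 1) / ((k : ℝ) * ((k : ℝ) - 2))) ∧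
    (2 * ((k : ℝ) - 1) ^ 3 * Real.log ((k : ℝ) - 1) / ((k : ℝ) * ((k : ℝ) - 2))
        < 2 * Real.log k / (Real.log k - Real.log ((k : ℝ) - 1))) := by
  set x : ℝ := (k : ℝ) with hxdef
  have hx : (3:ℝ) ≤ x := by rw [hxdef]; exact_mod_cast hk
  have hx1 : (0:ℝ) < x - 1 := by linarith
  have hx2 : (0:ℝ) < x - 2 := by linarith
  have hx0 : (0:ℝ) < x := by linarith
  set L : ℝ := Real.log (x - 1) with hLdef
  set M : ℝ := Real.log x with hMdef
  set L' : ℝ := Real.log (x - 2) with hL'def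
  have hL : 0 < L := Real.log_pos (by linarith)
  have hML : L < M := Real.log_lt_log hx1 (by linarith)
  -- d1 lower bound: (x-1)*(L - L') > 1
  have hd1 : 1 < (x - 1) * (L - L') := by
    have h := Real.log_lt_sub_one_of_pos (show (0:ℝ) < (x-2)/(x-1) by positivity)
      (ne_of_lt (by rw [div_lt_one hx1]; linarith))
    rw [Real.log_div (ne_of_gt hx2) (ne_of_gt hx1)] at h
    have heq : (x-2)/(x-1) - 1 = -(1/(x-1)) := by field_simp; norm_num
    rw [heq] at h
    have h2 : 1/(x-1) < L - L' := by linarith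
    have := (div_lt_iff₀ hx1).mp h2
    linarith [this]
  -- d2 upper bound: (x-1)*(M - L) < 1
  have hd2a : (x - 1) * (M - L) < 1 := by
    have h := Real.log_lt_sub_one_of_pos (show (0:ℝ) < x/(x-1) by positivity)
      (ne_of_gt (by rw [lt_div_iff₀ hx1]; linarith))
    rw [Real.log_div (ne_of_gt hx0) (ne_of_gt hx1)] at h
    have heq : x/(x-1) - 1 = 1/(x-1) := by field_simp; ring
    rw [heq] at h
    have := (lt_div_iff₀ hx1).mp h
    linarith [this]
  -- d2 lower bound: 1 < x*(M - L)
  have hd2b : 1 < x * (M - L) := by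
    have h := Real.log_lt_sub_one_of_pos (show (0:ℝ) < (x-1)/x by positivity)
      (ne_of_lt (by rw [div_lt_one hx0]; linarith))
    rw [Real.log_div (ne_of_gt hx1) (ne_of_gt hx0)] at h
    have heq : (x-1)/x - 1 = -(1/x) := by field_simp; ring
    rw [heq] at h
    have h2 : 1/x < M - L := by linarith
    have := (div_lt_iff₀ hx0).mp h2
    linarith [this]
  have hA : x * M ≤ (x - 1)^2 := xlogx_le x hx
  have hxx2 : (0:ℝ) < x * (x - 2) := mul_pos hx0 hx2
  constructor
  · rw [div_lt_div_iff₀ (by nlinarith) hxx2]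
    nlinarith [mul_lt_mul_of_pos_left hd1 (show (0:ℝ) < 2*(x-1)^2*L by positivity),
      mul_pos hx1 hx2, hL]
  · rw [div_lt_div_iff₀ hxx2 (by linarith)]
    nlinarith [mul_lt_mul_of_pos_left hd2a (show (0:ℝ) < 2*(x-1)^2*L by positivity),
      mul_lt_mul_of_pos_left hd2b (show (0:ℝ) < (x-1)^2 by positivity),
      mul_lt_mul_of_pos_left hML (show (0:ℝ) < 2*(x-1)^2 by positivity),
      hL, hx0, mul_pos hx0 hx2]
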